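/- Let a, b ∈ ℝⁿ be unit vectors with ‖a − b‖₂ ≤ γ, let u ∈ ℝⁿ, and let w* ∈ [0,1]ⁿ satisfy Σᵢ w*ᵢ aᵢ uᵢ ≥ 0. Suppose at most one coordinate of w* is strictly between 0 and 1. Let δ, ε > 0 with γ ≤ ε δ², and suppose |{ i : |aᵢ| < δ/√n }| ≤ εn, |{ i : |bᵢ| < δ/√n }| ≤ εn, and |{ i : |uᵢ| < (δ/√n)·‖u‖₂ }| ≤ εn. Then there exists w ∈ [0,1]ⁿ with Σᵢ wᵢ bᵢ uᵢ ≥ 0 and ‖w‖₁ ≥ ‖w*‖₁ − 3εn − 1. -/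

import Mathlib

/-- rounding lemma for the net algorithm. If `a, b` are unit
vectors with `‖a − b‖₂ ≤ γ ≤ εδ²`, `w*` is a feasible weight vector for `a`
with at most one fractional coordinate, and the small-coordinate sets of
`a`, `b`, `u` each have size at most `εn`, then `w*` can be rounded to a
feasible `w` for `b` with `‖w‖₁ ≥ ‖w*‖₁ − 3εn − 1`. -/
theorem net_rounding_lemma (n : ℕ) (a b u : Fin n → ℝ) (γ δ ε : ℝ)
    (hδ : 0 < δ) (hε : 0 < ε) (hγ : γ ≤ ε * δ ^ 2)
    (ha1 : ∑ i, a i ^ 2 = 1) (hb1 : ∑ i, b i ^ 2 = 1)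
    (hab : Real.sqrt (∑ i, (a i - b i) ^ 2) ≤ γ)
    (ws : Fin n → ℝ) (hws : ∀ i, 0 ≤ ws i ∧ ws i ≤ 1)
    (hfeas : 0 ≤ ∑ i, ws i * a i * u i)
    (hfrac : (Finset.univ.filter (fun i => 0 < ws i ∧ ws i < 1)).card ≤ 1)
    (hsa : ((Finset.univ.filter (fun i => |a i| < δ / Real.sqrt n)).card : ℝ) ≤ ε * n)
    (hsb : ((Finset.univ.filter (fun i => |b i| < δ / Real.sqrt n)).card : ℝ) ≤ ε * n)
    (hsu : ((Finset.univ.filter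
        (fun i => |u i| < (δ / Real.sqrt n) * Real.sqrt (∑ j, u j ^ 2))).card : ℝ)
          ≤ ε * n) :
    ∃ w : Fin n → ℝ, (∀ i, 0 ≤ w i ∧ w i ≤ 1) ∧
      0 ≤ ∑ i, w i * b i * u i ∧
      (∑ i, ws i) - 3 * ε * n - 1 ≤ ∑ i, w i := by
  have hn : 0 < n := by
    rcases Nat.eq_zero_or_pos n with h | h
    · subst h; simp at ha1
    · exact h
  have hγ0 : 0 ≤ γ := le_trans (Real.sqrt_nonneg _) hab
  set U := Real.sqrt (∑ j, u j ^ 2) with hUdef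
  have hU0 : 0 ≤ U := Real.sqrt_nonneg _
  set s : ℝ := δ / Real.sqrt n with hsdef
  have hsn : (0:ℝ) < Real.sqrt n := Real.sqrt_pos.2 (by exact_mod_cast hn)
  have hs0 : 0 < s := div_pos hδ hsn
  have hs2 : s ^ 2 = δ ^ 2 / n := by
    rw [hsdef, div_pow, Real.sq_sqrt (by positivity)]
  -- Cauchy-Schwarz step
  have hCS : (∑ i, ws i * a i * u i) - γ * U ≤ ∑ i, ws i * b i * u i := by
    have h1 : ∑ i, (ws i * a i * u i - ws i * b i * u i) ≤ γ * U := by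
      have h2 : ∀ i, ws i * a i * u i - ws i * b i * u i ≤ |a i - b i| * |u i| := by
        intro i
        have := (hws i).1; have := (hws i).2
        have : ws i * a i * u i - ws i * b i * u i = ws i * ((a i - b i) * u i) := by ring
        rw [this]
        calc ws i * ((a i - b i) * u i) ≤ |ws i * ((a i - b i) * u i)| := le_abs_self _
          _ = |ws i| * (|a i - b i| * |u i|) := by rw [abs_mul, abs_mul]
          _ ≤ 1 * (|a i - b i| * |u i|) := by
              apply mul_le_mul_of_nonneg_right _ (by positivity)
              rw [abs_of_nonneg (hws i).1]; exact (hws i).2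
          _ = |a i - b i| * |u i| := one_mul _
      calc ∑ i, (ws i * a i * u i - ws i * b i * u i) ≤ ∑ i, |a i - b i| * |u i| :=
            Finset.sum_le_sum fun i _ => h2 i
        _ ≤ Real.sqrt (∑ i, |a i - b i| ^ 2) * Real.sqrt (∑ i, |u i| ^ 2) :=
            Real.sum_mul_le_sqrt_mul_sqrt _ _ _
        _ = Real.sqrt (∑ i, (a i - b i) ^ 2) * U := by simp [sq_abs, hUdef]
        _ ≤ γ * U := mul_le_mul_of_nonneg_right hab hU0
    have := Finset.sum_sub_distrib (f := fun i => ws i * a i * u i)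
      (g := fun i => ws i * b i * u i) (s := Finset.univ)
    linarith [h1, this ▸ h1]
  have hfeasb : -(γ * U) ≤ ∑ i, ws i * b i * u i := by linarith
  -- good set
  set G := Finset.univ.filter
    (fun i => ws i = 1 ∧ s ≤ |b i| ∧ s * U ≤ |u i| ∧ b i * u i < 0) with hGdef
  set m := ⌈γ * n / δ ^ 2⌉₊ with hmdef
  have hx0 : 0 ≤ γ * n / δ ^ 2 := by positivity
  have hxε : γ * n / δ ^ 2 ≤ ε * n := by
    rw [div_le_iff₀ (by positivity)]
    calc γ * n ≤ ε * δ ^ 2 * n := by nlinarith [Nat.cast_nonneg (α := ℝ) n]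
      _ = ε * n * δ ^ 2 := by ring
  have hmle : (m : ℝ) ≤ ε * n + 1 := by
    have := Nat.ceil_lt_add_one hx0
    linarith
  have hmx : γ * n / δ ^ 2 ≤ (m : ℝ) := Nat.le_ceil _
  -- key bound on G elements
  have hGbound : ∀ i ∈ G, b i * u i ≤ -(δ ^ 2 / n * U) := by
    intro i hi
    rw [hGdef, Finset.mem_filter] at hi
    obtain ⟨-, -, hbi, hui, hneg⟩ := hi
    have habs : δ ^ 2 / n * U ≤ |b i * u i| := by
      rw [abs_mul]
      calc δ ^ 2 / n * U = s * (s * U) := by rw [← hs2]; ring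
        _ ≤ |b i| * |u i| := by
            apply mul_le_mul hbi hui (by positivity) (abs_nonneg _)
    rw [abs_of_neg hneg] at habs; linarith
  by_cases hcase : m ≤ G.card
  · -- Case A: zero out a subset Z of G with |Z| = m
    obtain ⟨Z, hZG, hZcard⟩ := Finset.exists_subset_card_eq hcase
    refine ⟨fun i => if i ∈ Z then 0 else ws i, ?_, ?_, ?_⟩
    · intro i; by_cases h : i ∈ Z <;> simp [h, hws i, (hws i).1, (hws i).2]
    · have hsplit : ∑ i, (if i ∈ Z then (0:ℝ) else ws i) * b i * u i
          = (∑ i, ws i * b i * u i) - ∑ i ∈ Z, ws i * b i * u i := by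
        have h1 : ∑ i, (if i ∈ Z then (0:ℝ) else ws i) * b i * u i
            = ∑ i ∈ Zᶜ, ws i * b i * u i := by
          rw [← Finset.sum_add_sum_compl Z
            (f := fun i => (if i ∈ Z then (0:ℝ) else ws i) * b i * u i)]
          rw [Finset.sum_eq_zero (fun i hi => by simp [hi]), zero_add]
          exact Finset.sum_congr rfl (fun i hi => by simp [Finset.mem_compl.1 hi])
        rw [h1, eq_sub_iff_add_eq, add_comm]
        exact Finset.sum_add_sum_compl Z _
      rw [hsplit]
      have hZsum : ∑ i ∈ Z, ws i * b i * u i ≤ -(γ * U) := by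
        have h1 : ∀ i ∈ Z, ws i * b i * u i ≤ -(δ ^ 2 / n * U) := by
          intro i hi
          have hiG := hZG hi
          have hw1 : ws i = 1 := by
            rw [hGdef, Finset.mem_filter] at hiG; exact hiG.2.1
          rw [hw1, one_mul]
          exact hGbound i hiG
        calc ∑ i ∈ Z, ws i * b i * u i ≤ ∑ i ∈ Z, -(δ ^ 2 / n * U) :=
              Finset.sum_le_sum h1
          _ = (m : ℝ) * -(δ ^ 2 / n * U) := by rw [Finset.sum_const, hZcard]; simp [mul_comm]
          _ ≤ -(γ * U) := by
              rw [mul_neg, neg_le_neg_iff]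
              have h := mul_le_mul_of_nonneg_right hmx
                (show (0:ℝ) ≤ δ ^ 2 / n * U by positivity)
              have hn0 : (n:ℝ) ≠ 0 := by positivity
              have hδ0 : δ ≠ 0 := ne_of_gt hδ
              have heq : γ * ↑n / δ ^ 2 * (δ ^ 2 / ↑n * U) = γ * U := by
                field_simp
              linarith [heq ▸ h]
      linarith
    · have hZws : ∑ i ∈ Z, ws i = (m : ℝ) := by
        calc ∑ i ∈ Z, ws i = ∑ i ∈ Z, (1:ℝ) :=
              Finset.sum_congr rfl (fun i hi => by
                have hiG := hZG hi
                rw [hGdef, Finset.mem_filter] at hiG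
                exact hiG.2.1)
          _ = (m : ℝ) := by rw [Finset.sum_const, hZcard]; simp
      have hwsum : ∑ i, (if i ∈ Z then (0:ℝ) else ws i) = (∑ i, ws i) - (m : ℝ) := by
        have h1 : ∑ i, (if i ∈ Z then (0:ℝ) else ws i) = ∑ i ∈ Zᶜ, ws i := by
          rw [← Finset.sum_add_sum_compl Z
            (f := fun i => if i ∈ Z then (0:ℝ) else ws i)]
          rw [Finset.sum_eq_zero (fun i hi => by simp [hi]), zero_add]
          exact Finset.sum_congr rfl (fun i hi => by simp [Finset.mem_compl.1 hi])
        rw [h1, eq_sub_iff_add_eq, ← hZws, add_comm]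
        exact Finset.sum_add_sum_compl Z _
      rw [hwsum]
      have hεn : (0:ℝ) ≤ ε * n := by positivity
      linarith
  · -- Case B: zero out all coordinates with b i * u i < 0
    push_neg at hcase
    have hGsmall : (G.card : ℝ) ≤ ε * n := by
      have := (Nat.lt_ceil).1 hcase
      linarith
    refine ⟨fun i => if b i * u i < 0 then 0 else ws i, ?_, ?_, ?_⟩
    · intro i; by_cases h : b i * u i < 0 <;> simp [h, hws i, (hws i).1, (hws i).2]
    · apply Finset.sum_nonneg
      intro i _
      by_cases h : b i * u i < 0
      · simp [h]
      · push_neg at h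
        simp only [if_neg (not_lt.2 h)]
        rw [mul_assoc]
        exact mul_nonneg (hws i).1 h
    · -- l1 bound
      set N := Finset.univ.filter (fun i => b i * u i < 0 ∧ 0 < ws i) with hNdef
      have hdiff : (∑ i, ws i) - ∑ i, (if b i * u i < 0 then (0:ℝ) else ws i)
          ≤ (N.card : ℝ) := by
        rw [← Finset.sum_sub_distrib]
        have : ∀ i, ws i - (if b i * u i < 0 then (0:ℝ) else ws i)
            ≤ if i ∈ N then 1 else 0 := by
          intro i
          by_cases h : b i * u i < 0
          · by_cases h2 : 0 < ws i
            · have : i ∈ N := by rw [hNdef]; simp [h, h2]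
              simp [h, this, (hws i).2]
            · push_neg at h2
              have : ws i = 0 := le_antisymm h2 (hws i).1
              simp [h, this]
              split <;> norm_num
          · simp [h]
            split <;> norm_num
        calc ∑ i, (ws i - (if b i * u i < 0 then (0:ℝ) else ws i))
            ≤ ∑ i, (if i ∈ N then (1:ℝ) else 0) := Finset.sum_le_sum (fun i _ => this i)
          _ = (N.card : ℝ) := by
              rw [Finset.sum_ite_mem, Finset.univ_inter, Finset.sum_const]; simp
      have hNsub : N ⊆ G ∪ (Finset.univ.filter (fun i => |b i| < s))
          ∪ (Finset.univ.filter (fun i => |u i| < s * U))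
          ∪ (Finset.univ.filter (fun i => 0 < ws i ∧ ws i < 1)) := by
        intro i hi
        rw [hNdef, Finset.mem_filter] at hi
        obtain ⟨-, hneg, hpos⟩ := hi
        simp only [Finset.mem_union, Finset.mem_filter, Finset.mem_univ, true_and]
        by_cases hb : |b i| < s
        · tauto
        by_cases hu : |u i| < s * U
        · tauto
        by_cases hw : ws i < 1
        · tauto
        · push_neg at hb hu hw
          left; left; left
          rw [hGdef, Finset.mem_filter]
          exact ⟨Finset.mem_univ i, le_antisymm (hws i).2 hw, hb, hu, hneg⟩
      have hNcard : (N.card : ℝ) ≤ 3 * ε * n + 1 := by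
        have h1 := Finset.card_le_card hNsub
        have h2 : (G ∪ (Finset.univ.filter (fun i => |b i| < s))
            ∪ (Finset.univ.filter (fun i => |u i| < s * U))
            ∪ (Finset.univ.filter (fun i => 0 < ws i ∧ ws i < 1))).card
            ≤ G.card + (Finset.univ.filter (fun i => |b i| < s)).card
              + (Finset.univ.filter (fun i => |u i| < s * U)).card
              + (Finset.univ.filter (fun i => 0 < ws i ∧ ws i < 1)).card := by
          calc _ ≤ _ := Finset.card_union_le _ _
            _ ≤ _ := Nat.add_le_add_right (le_trans (Finset.card_union_le _ _)
                (Nat.add_le_add_right (Finset.card_union_le _ _) _)) _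
        have h3 : (N.card : ℝ) ≤ (G.card : ℝ)
            + ((Finset.univ.filter (fun i => |b i| < s)).card : ℝ)
            + ((Finset.univ.filter (fun i => |u i| < s * U)).card : ℝ)
            + ((Finset.univ.filter (fun i => 0 < ws i ∧ ws i < 1)).card : ℝ) := by
          exact_mod_cast le_trans h1 h2
        have h4 : ((Finset.univ.filter (fun i => 0 < ws i ∧ ws i < 1)).card : ℝ) ≤ 1 := by
          exact_mod_cast hfrac
        have h5 : ((Finset.univ.filter (fun i => |u i| < s * U)).card : ℝ) ≤ ε * n := hsu
        linarith [hsb, hGsmall]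
      linarith
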